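/- Let B be a real p×q matrix with p ≥ q ≥ 1 and n ≥ 1. Suppose y ∈ ℝ^q and x ∈ ℝ^p are not both zero and λ ∈ ℝ with λ ≠ n − 1 is such that D · w = λ · w, where w is the vector indexed by Fin q ⊕ (Fin n × Fin p) with w(inl j) = y j and w(inr (k,i)) = x i for all k. Then n − 1 − λ is an eigenvalue of D, i.e., there is a nonzero vector u with D · u = (n − 1 − λ) · u. -/
import Mathlib


open Matrix

/-- The matrix `C` of Construction III: indexed by `Fin p ⊕ (Fin n × Fin q)`,
first block row `[0, B, …, B]`, and the `n×n` grid of `q×q` blocks has zero diagonal blocks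
and identity blocks `I_q` off the diagonal. -/
def matC3 (p q n : ℕ) (B : Matrix (Fin p) (Fin q) ℝ) :
    Matrix (Fin p ⊕ Fin n × Fin q) (Fin p ⊕ Fin n × Fin q) ℝ :=
  Matrix.of fun a b =>
    match a, b with
    | Sum.inl i, Sum.inr (_, j) => B i j
    | Sum.inr (_, j), Sum.inl i => B i j
    | Sum.inr (k, j), Sum.inr (k', j') => if k ≠ k' ∧ j = j' then 1 else 0
    | _, _ => 0

/-- The matrix `D` of Construction III: indexed by `Fin q ⊕ (Fin n × Fin p)`,
first block row `[0, Bᵀ, …, Bᵀ]`, and the `n×n` grid of `p×p` blocks has zero diagonal blocks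
and identity blocks `I_p` off the diagonal. -/
def matD3 (p q n : ℕ) (B : Matrix (Fin p) (Fin q) ℝ) :
    Matrix (Fin q ⊕ Fin n × Fin p) (Fin q ⊕ Fin n × Fin p) ℝ :=
  Matrix.of fun a b =>
    match a, b with
    | Sum.inl j, Sum.inr (_, i) => B i j
    | Sum.inr (_, i), Sum.inl j => B i j
    | Sum.inr (k, i), Sum.inr (k', i') => if k ≠ k' ∧ i = i' then 1 else 0
    | _, _ => 0

lemma matD3_mulVec_const (p q n : ℕ) (B : Matrix (Fin p) (Fin q) ℝ)
    (s : Fin q → ℝ) (t : Fin p → ℝ) :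
    matD3 p q n B *ᵥ Sum.elim s (fun ki => t ki.2) =
      Sum.elim (fun j => (n : ℝ) * ∑ i, B i j * t i)
        (fun ki => (∑ j, B ki.2 j * s j) + ((n : ℝ) - 1) * t ki.2) := by
  funext a
  cases a with
  | inl j =>
    simp [matD3, mulVec, dotProduct, Fintype.sum_sum_type, Fintype.sum_prod_type,
      Finset.mul_sum]
  | inr ki =>
    obtain ⟨k, i⟩ := ki
    simp only [matD3, mulVec, dotProduct, Fintype.sum_sum_type, Fintype.sum_prod_type,
      Matrix.of_apply, Sum.elim_inl, Sum.elim_inr]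
    congr 1
    have h1 : ∀ k' : Fin n, ∑ i' : Fin p, (if k ≠ k' ∧ i = i' then (1:ℝ) else 0) * t i'
        = if k = k' then 0 else t i := by
      intro k'
      by_cases h : k = k' <;> simp [h, Finset.sum_ite_eq]
    rw [Finset.sum_congr rfl fun k' _ => h1 k']
    have h2 : (∑ k' : Fin n, if k = k' then (0:ℝ) else t i)
        = ∑ k' : Fin n, (t i - if k = k' then t i else 0) := by
      refine Finset.sum_congr rfl fun k' _ => ?_
      split <;> ring
    rw [h2, Finset.sum_sub_distrib, Finset.sum_const, Finset.sum_ite_eq Finset.univ k,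
      if_pos (Finset.mem_univ k)]
    simp [Finset.card_univ]
    ring


/-- If `(y, x, …, x)` (not zero) is an eigenvector of `D` with eigenvalue `λ ≠ n − 1`, then
`n − 1 − λ` is also an eigenvalue of `D`. -/
theorem matD3_eigenvalue_reflection (p q n : ℕ) (hq : 1 ≤ q) (hpq : q ≤ p) (hn : 1 ≤ n)
    (B : Matrix (Fin p) (Fin q) ℝ) (x : Fin p → ℝ) (y : Fin q → ℝ) (l : ℝ)
    (hl : l ≠ (n : ℝ) - 1)
    (hxy : ¬(x = 0 ∧ y = 0))
    (hev : matD3 p q n B *ᵥ Sum.elim y (fun ki => x ki.2) =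
      l • Sum.elim y (fun ki => x ki.2)) :
    ∃ u : Fin q ⊕ Fin n × Fin p → ℝ, u ≠ 0 ∧
      matD3 p q n B *ᵥ u = ((n : ℝ) - 1 - l) • u := by
  have k0 : Fin n := ⟨0, hn⟩
  rw [matD3_mulVec_const] at hev
  have E1 : ∀ j, (n : ℝ) * ∑ i, B i j * x i = l * y j := fun j => by
    have := congrFun hev (Sum.inl j); simpa using this
  have E2 : ∀ i, (∑ j, B i j * y j) + ((n : ℝ) - 1) * x i = l * x i := fun i => by
    have := congrFun hev (Sum.inr (k0, i)); simpa using this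
  set μ : ℝ := (n : ℝ) - 1 - l with hμdef
  have hμ : μ ≠ 0 := by
    intro h
    apply hl
    linarith [sub_eq_zero.mp h]
  by_cases hx : x = 0
  · -- x = 0; then l = 0 and we find t ≠ 0 with Bᵀ t = 0
    have hy : y ≠ 0 := fun h => hxy ⟨hx, h⟩
    subst hx
    obtain ⟨j0, hj0⟩ := Function.ne_iff.mp hy
    have hl0 : l = 0 := by
      have := E1 j0
      simp at this
      rcases this with h | h
      · exact h
      · exact absurd h hj0
    have hBy : ∀ i, (∑ j, B i j * y j) = 0 := fun i => by
      have := E2 i; simpa [hl0] using this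
    -- find t ≠ 0 in ker of Bᵀ.mulVecLin
    have hker : LinearMap.ker (Bᵀ).mulVecLin ≠ ⊥ := by
      intro h
      have hinj := LinearMap.ker_eq_bot.mp h
      have hrank : (Bᵀ).rank = p := by
        have := LinearMap.finrank_range_add_finrank_ker (Bᵀ).mulVecLin
        rw [h, finrank_bot] at this
        simpa [Matrix.rank] using this
      have hrankB : B.rank < q := by
        have hyk : y ∈ LinearMap.ker B.mulVecLin := by
          simp only [LinearMap.mem_ker, mulVecLin_apply]
          funext i
          simpa [mulVec, dotProduct] using hBy i
        have hkpos : 0 < Module.finrank ℝ (LinearMap.ker B.mulVecLin) := by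
          rw [Module.finrank_pos_iff]
          exact ⟨⟨y, hyk⟩, 0, by simpa [Subtype.ext_iff] using hy⟩
        have := LinearMap.finrank_range_add_finrank_ker B.mulVecLin
        have hfr : Module.finrank ℝ (Fin q → ℝ) = q := by simp
        rw [hfr] at this
        have : B.rank + Module.finrank ℝ (LinearMap.ker B.mulVecLin) = q := this
        omega
      rw [Matrix.rank_transpose] at hrank
      omega
    obtain ⟨t, htk, ht0⟩ := Submodule.exists_mem_ne_zero_of_ne_bot hker
    have hBt : ∀ j, (∑ i, B i j * t i) = 0 := fun j => by
      have h' := congrFun ((LinearMap.mem_ker).mp htk) j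
      simp only [mulVecLin_apply, mulVec, dotProduct, transpose_apply, Pi.zero_apply] at h'
      exact h'
    refine ⟨Sum.elim (0 : Fin q → ℝ) (fun ki => t ki.2), ?_, ?_⟩
    · intro h
      obtain ⟨i0, hi0⟩ := Function.ne_iff.mp ht0
      exact hi0 (by simpa using congrFun h (Sum.inr (k0, i0)))
    · rw [matD3_mulVec_const]
      funext a
      cases a with
      | inl j => simp [hBt j]
      | inr ki => simp [hl0, hμdef]
  · -- x ≠ 0
    refine ⟨Sum.elim (fun j => (l / μ) * y j) (fun ki => x ki.2), ?_, ?_⟩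
    · intro h
      obtain ⟨i0, hi0⟩ := Function.ne_iff.mp hx
      exact hi0 (by simpa using congrFun h (Sum.inr (k0, i0)))
    · rw [matD3_mulVec_const]
      funext a
      cases a with
      | inl j =>
        simp only [Sum.elim_inl, Pi.smul_apply, smul_eq_mul, E1 j]
        field_simp
      | inr ki =>
        obtain ⟨k, i⟩ := ki
        simp only [Sum.elim_inr, Pi.smul_apply, smul_eq_mul]
        have hB : (∑ j, B i j * ((l / μ) * y j)) = (l / μ) * ∑ j, B i j * y j := by
          rw [Finset.mul_sum]; exact Finset.sum_congr rfl fun j _ => by ring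
        have hE : (∑ j, B i j * y j) = l * x i - ((n : ℝ) - 1) * x i := by
          linarith [E2 i]
        rw [hB, hE]
        field_simp
        ring
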